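/- arXiv:1108.5505 — 3 statements merged into one kernel-verified Lean document; each statement's English description precedes it below -/
import Mathlib

section
/- Let β ∈ KL satisfy the semigroup property β(s, t₁+t₂) = β(β(s,t₁), t₂), and let (t_j)_{j≥0} with t_0 = 0 be an increasing sequence. Suppose a nonnegative function R defined on a hybrid time domain satisfies R(t, j) ≤ β(R(t_j, j), t − t_j) for t_j ≤ t ≤ t_{j+1}, and R(t_{j+1}, j+1) ≤ R(t_{j+1}, j) for all j. Then R(t, j) ≤ β(R(0,0), t) for all (t,j) in the domain. -/
/-- Class-KL function. -/
def ClassKL (β : ℝ → ℝ → ℝ) : Prop :=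
  Continuous (fun p : ℝ × ℝ => β p.1 p.2) ∧
    (∀ t ≥ (0:ℝ), StrictMonoOn (fun s => β s t) (Set.Ici 0) ∧ β 0 t = 0) ∧
    ∀ s > (0:ℝ), AntitoneOn (β s) (Set.Ici 0) ∧
      Filter.Tendsto (β s) Filter.atTop (nhds 0)

/-- concatenating per-interval KL bounds across jumps. If
R(t,j) ≤ β(R(t_j,j), t−t_j) on each interval [t_j, t_{j+1}], R does not increase
at jumps, and β is class-KL with the semigroup property, then
R(t,j) ≤ β(R(0,0), t) on the whole hybrid time domain. -/
theorem stmt9 (β : ℝ → ℝ → ℝ) (hβ : ClassKL β)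
    (hsg : ∀ s ≥ (0:ℝ), ∀ t₁ ≥ (0:ℝ), ∀ t₂ ≥ (0:ℝ), β s (t₁ + t₂) = β (β s t₁) t₂)
    (t : ℕ → ℝ) (ht0 : t 0 = 0) (htmono : Monotone t)
    (R : ℝ → ℕ → ℝ) (hRpos : ∀ s j, 0 ≤ R s j)
    (hflow : ∀ j : ℕ, ∀ s : ℝ, t j ≤ s → s ≤ t (j + 1) → R s j ≤ β (R (t j) j) (s - t j))
    (hjump : ∀ j : ℕ, R (t (j + 1)) (j + 1) ≤ R (t (j + 1)) j) :
    ∀ j : ℕ, ∀ s : ℝ, t j ≤ s → s ≤ t (j + 1) → R s j ≤ β (R 0 0) s := by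
  obtain ⟨-, hmono, -⟩ := hβ
  have hmonoLe : ∀ u ≥ (0:ℝ), ∀ a ≥ (0:ℝ), ∀ b ≥ (0:ℝ), a ≤ b → β a u ≤ β b u := by
    intro u hu a ha b hb hab
    exact (hmono u hu).1.monotoneOn ha hb hab
  have hβnn : ∀ a ≥ (0:ℝ), ∀ u ≥ (0:ℝ), 0 ≤ β a u := by
    intro a ha u hu
    have := hmonoLe u hu 0 le_rfl a ha ha
    rwa [(hmono u hu).2] at this
  have htnn : ∀ j, 0 ≤ t j := fun j => ht0 ▸ htmono (Nat.zero_le j)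
  -- key induction
  have key : ∀ j : ℕ, ∀ u ≥ (0:ℝ), β (R (t j) j) u ≤ β (R 0 0) (t j + u) := by
    intro j
    induction j with
    | zero => intro u hu; rw [ht0, zero_add]
    | succ j ih =>
      intro u hu
      have hle : t j ≤ t (j + 1) := htmono (Nat.le_succ j)
      have hdnn : (0:ℝ) ≤ t (j + 1) - t j := sub_nonneg.2 hle
      have h1 : R (t (j + 1)) (j + 1) ≤ β (R (t j) j) (t (j + 1) - t j) :=
        (hjump j).trans (hflow j (t (j + 1)) hle le_rfl)
      have h2 : β (R (t (j + 1)) (j + 1)) u ≤ β (β (R (t j) j) (t (j + 1) - t j)) u :=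
        hmonoLe u hu _ (hRpos _ _) _ (hβnn _ (hRpos _ _) _ hdnn) h1
      rw [← hsg _ (hRpos _ _) _ hdnn _ hu] at h2
      have h3 := ih (t (j + 1) - t j + u) (by linarith)
      calc β (R (t (j + 1)) (j + 1)) u ≤ β (R (t j) j) (t (j + 1) - t j + u) := h2
        _ ≤ β (R 0 0) (t j + (t (j + 1) - t j + u)) := h3
        _ = β (R 0 0) (t (j + 1) + u) := by ring_nf
  intro j s hs1 hs2
  have := key j (s - t j) (sub_nonneg.2 hs1)
  calc R s j ≤ β (R (t j) j) (s - t j) := hflow j s hs1 hs2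
    _ ≤ β (R 0 0) (t j + (s - t j)) := this
    _ = β (R 0 0) s := by ring_nf
end

section
/- For the round-robin protocol with l nodes, where at step κ the block e_{(κ mod l)+1} is set to zero and other blocks are unchanged, there exists ρ ∈ [0,1) and a function W : ℤ≥0 × ℝ^{n} → ℝ≥0 (e.g. W(κ,e) = sqrt(Σᵢ aᵢ(κ)|eᵢ|²) with suitable positive weights aᵢ(κ) periodic in κ) satisfying α(|e|) ≤ W(κ,e) ≤ ᾱ(|e|) for class-K∞ α, ᾱ, and W(κ+1, h(κ,e)) ≤ ρ·W(κ,e) for all κ, e. -/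
open scoped BigOperators

/-- Class-K∞ function. -/
def ClassKInf (f : ℝ → ℝ) : Prop :=
  Continuous f ∧ StrictMono f ∧ f 0 = 0 ∧ Filter.Tendsto f Filter.atTop Filter.atTop

lemma classKInf_const_mul {c : ℝ} (hc : 0 < c) : ClassKInf (fun r => c * r) := by
  refine ⟨by continuity, fun a b h => by exact mul_lt_mul_of_pos_left h hc, by simp, ?_⟩
  exact Filter.Tendsto.const_mul_atTop hc Filter.tendsto_id

lemma zmod_val_sub_one {l : ℕ} [NeZero l] {x : ZMod l} (hx : x ≠ 0) :
    (x - 1).val + 1 = x.val := by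
  have h1 : 1 ≤ x.val := ZMod.val_pos.mpr hx
  have hlt : x.val - 1 < l := lt_of_le_of_lt (Nat.sub_le _ _) x.val_lt
  have : x - 1 = ((x.val - 1 : ℕ) : ZMod l) := by
    push_cast [Nat.cast_sub h1]
    rw [ZMod.natCast_zmod_val]
  rw [this, ZMod.val_cast_of_lt hlt]
  omega

/-- for the round-robin protocol (at step κ the block of index
κ mod l is zeroed), there exist ρ ∈ [0,1) and a Lyapunov function W for the
protocol, sandwiched between class-K∞ functions of |e| and contracting at jumps. -/
theorem stmt12 (l : ℕ) (hl : 0 < l)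
    (E : Fin l → Type*) [∀ i, NormedAddCommGroup (E i)] :
    ∃ ρ : ℝ, 0 ≤ ρ ∧ ρ < 1 ∧
      ∃ W : ℕ → (∀ i, E i) → ℝ, ∃ α α' : ℝ → ℝ, ClassKInf α ∧ ClassKInf α' ∧
        (∀ (κ : ℕ) (e : ∀ i, E i),
          α (Real.sqrt (∑ i, ‖e i‖ ^ 2)) ≤ W κ e ∧
            W κ e ≤ α' (Real.sqrt (∑ i, ‖e i‖ ^ 2))) ∧
        ∀ (κ : ℕ) (e : ∀ i, E i),
          W (κ + 1) (Function.update e (⟨κ % l, Nat.mod_lt κ hl⟩ : Fin l) 0) ≤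
            ρ * W κ e := by
  haveI : NeZero l := ⟨hl.ne'⟩
  -- time until node i is served
  set d : ℕ → Fin l → ℕ := fun κ i => ((i.val : ZMod l) - (κ : ZMod l)).val with hd
  set W : ℕ → (∀ i, E i) → ℝ :=
    fun κ e => Real.sqrt (∑ i, (2 : ℝ) ^ (d κ i) * ‖e i‖ ^ 2) with hW
  have hnn : ∀ (κ : ℕ) (e : ∀ i, E i) (i : Fin l),
      (0 : ℝ) ≤ (2 : ℝ) ^ (d κ i) * ‖e i‖ ^ 2 := fun κ e i =>
    mul_nonneg (by positivity) (by positivity)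
  refine ⟨Real.sqrt 2⁻¹, Real.sqrt_nonneg _, ?_, W, (fun r => 1 * r),
    (fun r => Real.sqrt ((2 : ℝ) ^ (l - 1)) * r), classKInf_const_mul one_pos,
    classKInf_const_mul (by positivity), ?_, ?_⟩
  · rw [show (1 : ℝ) = Real.sqrt 1 by simp]
    exact Real.sqrt_lt_sqrt (by norm_num) (by norm_num)
  · intro κ e
    dsimp only
    constructor
    · rw [one_mul]
      apply Real.sqrt_le_sqrt
      apply Finset.sum_le_sum
      intro i _
      nlinarith [one_le_pow₀ (by norm_num : (1:ℝ) ≤ 2) (n := d κ i), sq_nonneg ‖e i‖]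
    · rw [← Real.sqrt_mul (by positivity), Finset.mul_sum]
      apply Real.sqrt_le_sqrt
      apply Finset.sum_le_sum
      intro i _
      have hdl : d κ i ≤ l - 1 := by
        have h := ((i.val : ZMod l) - (κ : ZMod l)).val_lt
        simp only [hd]
        omega
      have : (2 : ℝ) ^ (d κ i) ≤ 2 ^ (l - 1) :=
        pow_le_pow_right₀ (by norm_num) hdl
      nlinarith [sq_nonneg ‖e i‖]
  · intro κ e
    set j : Fin l := ⟨κ % l, Nat.mod_lt κ hl⟩ with hj
    have hjz : ((j.val : ZMod l) - (κ : ZMod l)) = 0 := by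
      simp [hj, ZMod.natCast_mod]
    rw [hW]
    rw [show Real.sqrt 2⁻¹ * Real.sqrt (∑ i, (2 : ℝ) ^ (d κ i) * ‖e i‖ ^ 2)
        = Real.sqrt (∑ i, 2⁻¹ * ((2 : ℝ) ^ (d κ i) * ‖e i‖ ^ 2)) by
      rw [← Finset.mul_sum, Real.sqrt_mul (by norm_num)]]
    apply Real.sqrt_le_sqrt
    apply Finset.sum_le_sum
    intro i _
    by_cases hij : i = j
    · subst hij
      simp [Function.update_self]
    · rw [Function.update_of_ne hij]
      have hine : ((i.val : ZMod l) - (κ : ZMod l)) ≠ 0 := by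
        intro h
        apply hij
        have : (i.val : ZMod l) = (j.val : ZMod l) := by
          have := sub_eq_zero.mp h
          have h2 := sub_eq_zero.mp hjz
          rw [this, h2]
        have := congrArg ZMod.val this
        rw [ZMod.val_cast_of_lt i.2, ZMod.val_cast_of_lt j.2] at this
        exact Fin.ext this
      have hstep : d (κ + 1) i + 1 = d κ i := by
        rw [hd]
        simp only [Nat.cast_add, Nat.cast_one]
        rw [show (i.val : ZMod l) - ((κ : ZMod l) + 1) = ((i.val : ZMod l) - κ) - 1 by ring]
        exact zmod_val_sub_one hine
      have : (2 : ℝ) ^ (d (κ + 1) i) = 2⁻¹ * 2 ^ (d κ i) := by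
        rw [← hstep, pow_succ]; ring
      rw [this]; ring_nf; rfl
end

section
/- Let η solve the ODE η' = −2ηL − η² − G along a flow with L(t) ≤ M/2, G(t) ≤ M for a constant M ≥ 0 (on a compact sublevel set), starting from η(0) = a > 0. Then the function ψ(t) = aρ²/η(t) satisfies ψ' ≤ Mψ + aρ² + (M/(aρ²))ψ² as long as η(t) ≥ aρ² > 0; consequently the time for ψ to increase from ρ² to 1 (equivalently for η to decrease from a to aρ²) is bounded below by a strictly positive constant depending only on M, a, ρ. -/
/-- for the clock dynamics η' = −2ηL − η² − G with 0 ≤ 2L ≤ M,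
0 ≤ G ≤ M, η(0) = a, the function ψ = aρ²/η satisfies
ψ' ≤ Mψ + aρ² + (M/(aρ²))ψ² while η ≥ aρ², and the time for η to decrease from
a to aρ² is lower bounded by a positive constant depending only on M, a, ρ. -/
theorem stmt16 (M a ρ : ℝ) (hM : 0 ≤ M) (ha : 0 < a) (hρ0 : 0 < ρ) (hρ1 : ρ < 1) :
    ∃ τ > (0:ℝ), ∀ (η L G : ℝ → ℝ) (T : ℝ), 0 ≤ T →
      (∀ t ∈ Set.Icc (0:ℝ) T,
        HasDerivAt η (-2 * η t * L t - η t ^ 2 - G t) t) →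
      (∀ t ∈ Set.Icc (0:ℝ) T, 0 ≤ 2 * L t ∧ 2 * L t ≤ M) →
      (∀ t ∈ Set.Icc (0:ℝ) T, 0 ≤ G t ∧ G t ≤ M) →
      η 0 = a →
      (∀ t ∈ Set.Icc (0:ℝ) T, a * ρ ^ 2 ≤ η t) →
      η T = a * ρ ^ 2 →
      (∀ t ∈ Set.Icc (0:ℝ) T,
        HasDerivAt (fun s => a * ρ ^ 2 / η s)
          (a * ρ ^ 2 * (2 * η t * L t + η t ^ 2 + G t) / η t ^ 2) t ∧
        a * ρ ^ 2 * (2 * η t * L t + η t ^ 2 + G t) / η t ^ 2 ≤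
          M * (a * ρ ^ 2 / η t) + a * ρ ^ 2 +
            (M / (a * ρ ^ 2)) * (a * ρ ^ 2 / η t) ^ 2) ∧
      τ ≤ T := by
  have hρ2 : (0:ℝ) < ρ ^ 2 := by positivity
  have hρ2lt : ρ ^ 2 < 1 := by nlinarith
  have hC : (0:ℝ) < M * a + a ^ 2 + M := by nlinarith
  refine ⟨a * (1 - ρ ^ 2) / (M * a + a ^ 2 + M), div_pos (by nlinarith) hC, ?_⟩
  intro η L G T hT hη' hL hG hη0 hηlb hηT
  have haρ : (0:ℝ) < a * ρ ^ 2 := by positivity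
  have hηpos : ∀ t ∈ Set.Icc (0:ℝ) T, 0 < η t := fun t ht => lt_of_lt_of_le haρ (hηlb t ht)
  -- continuity of η on Icc
  have hcont : ContinuousOn η (Set.Icc 0 T) := fun t ht =>
    (hη' t ht).continuousAt.continuousWithinAt
  have hdiff : DifferentiableOn ℝ η (interior (Set.Icc (0:ℝ) T)) := by
    intro t ht
    exact ((hη' t (interior_subset ht)).differentiableAt).differentiableWithinAt
  -- η is antitone on Icc
  have hanti : AntitoneOn η (Set.Icc 0 T) := by
    apply antitoneOn_of_deriv_nonpos (convex_Icc 0 T) hcont hdiff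
    intro t ht
    have ht' := interior_subset ht
    rw [(hη' t ht').deriv]
    have h1 := (hL t ht').1
    have h2 := (hG t ht').1
    have h3 := hηpos t ht'
    nlinarith
  have hηub : ∀ t ∈ Set.Icc (0:ℝ) T, η t ≤ a := by
    intro t ht
    have := hanti (Set.left_mem_Icc.2 hT) ht ht.1
    simpa [hη0] using this
  constructor
  · intro t ht
    have hηt := hηpos t ht
    have hηne : η t ≠ 0 := ne_of_gt hηt
    constructor
    · have := ((hasDerivAt_const t (a * ρ ^ 2)).div (hη' t ht) hηne)
      exact this.congr_deriv (by ring)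
    · have h1 := (hL t ht).1
      have h2 := (hL t ht).2
      have h3 := (hG t ht).1
      have h4 := (hG t ht).2
      rw [div_le_iff₀ (by positivity : (0:ℝ) < η t ^ 2)]
      have e1 : M * (a * ρ ^ 2 / η t) * η t ^ 2 = M * (a * ρ ^ 2) * η t := by
        field_simp
      have e2 : (M / (a * ρ ^ 2)) * (a * ρ ^ 2 / η t) ^ 2 * η t ^ 2
          = M * (a * ρ ^ 2) := by
        field_simp
      nlinarith [sq_nonneg (η t), hηt, mul_pos haρ hηt]
  · -- lower bound on T
    have hmono : MonotoneOn (fun t => η t + (M * a + a ^ 2 + M) * t) (Set.Icc 0 T) := by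
      apply monotoneOn_of_deriv_nonneg (convex_Icc 0 T)
      · exact hcont.add (continuous_const.mul continuous_id).continuousOn
      · intro t ht
        exact ((((hη' t (interior_subset ht)).differentiableAt).add
          ((differentiable_const _).mul differentiable_id |>.differentiableAt)).differentiableWithinAt)
      · intro t ht
        have ht' := interior_subset ht
        have hd : HasDerivAt (fun t => η t + (M * a + a ^ 2 + M) * t)
            ((-2 * η t * L t - η t ^ 2 - G t) + (M * a + a ^ 2 + M)) t := by
          exact ((hη' t ht').add (((hasDerivAt_id t).const_mul (M * a + a ^ 2 + M)))).congr_deriv (by ring)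
        rw [hd.deriv]
        have h1 := (hL t ht').1
        have h2 := (hL t ht').2
        have h3 := (hG t ht').1
        have h4 := (hG t ht').2
        have h5 := hηpos t ht'
        have h6 := hηub t ht'
        nlinarith
    have := hmono (Set.left_mem_Icc.2 hT) (Set.right_mem_Icc.2 hT) hT
    simp only [hη0, hηT] at this
    rw [div_le_iff₀ hC]
    nlinarith
end
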